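/- Suppose a : ℓ² → (symmetric matrices indexed by ℕ×ℕ) satisfies: (i) |a_{ij}(x) - a_{ij}(y)| ≤ 2κ_γ/(1 + |i-j|^γ) for a constant κ_γ and some γ > 2, and (ii) |a_{ij}(x) - a_{ij}(y)| ≤ κ_β Σ_k |x_k - y_k|^α k^{-β} with α ∈ (1/2, 1] and 2β > 2 - α. Then there exists a constant c such that for all x, y ∈ ℓ², sup_i Σ_j |a_{ij}(x) - a_{ij}(y)| ≤ c ‖x - y‖^{α/2}, where ‖·‖ is the ℓ² norm. -/

import Mathlib

open scoped ENNReal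

theorem stmt_15 (γ α β κγ κβ : ℝ) (hγ : 2 < γ) (hα : 1 / 2 < α) (hα1 : α ≤ 1)
    (hβ : 2 - α < 2 * β)
    (a : lp (fun _ : ℕ+ => ℝ) 2 → ℕ+ → ℕ+ → ℝ)
    (hsymm : ∀ x i j, a x i j = a x j i)
    (hoff : ∀ (x y : lp (fun _ : ℕ+ => ℝ) 2) (i j : ℕ+),
      |a x i j - a y i j| ≤ 2 * κγ / (1 + |(i : ℝ) - (j : ℝ)| ^ γ))
    (hhold : ∀ (x y : lp (fun _ : ℕ+ => ℝ) 2) (i j : ℕ+),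
      |a x i j - a y i j| ≤ κβ * ∑' k : ℕ+, |x k - y k| ^ α * (k : ℝ) ^ (-β)) :
    ∃ c : ℝ, 0 < c ∧ ∀ (x y : lp (fun _ : ℕ+ => ℝ) 2) (i : ℕ+),
      ∑' j : ℕ+, |a x i j - a y i j| ≤ c * ‖x - y‖ ^ (α / 2) := by
  have hα0 : (0:ℝ) < α := by linarith
  have h2α : (0:ℝ) < 2 - α := by linarith
  have hγ0 : (0:ℝ) < γ := by linarith
  -- conjugate exponents
  set p : ℝ := 2 / α with hp
  set q : ℝ := 2 / (2 - α) with hq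
  have hpq : Real.HolderConjugate p q := by
    refine Real.holderConjugate_iff.mpr ⟨?_, ?_⟩
    · rw [hp, lt_div_iff₀ hα0]; linarith
    · rw [hp, hq, inv_div, inv_div]; ring
  have hq0 : 0 < q := by rw [hq]; positivity
  -- summable auxiliary series
  set fβ : ℕ → ℝ := fun n => (n:ℝ) ^ (-(β * q)) with hfβ
  have hβq : 1 < β * q := by
    rw [hq, show β * (2 / (2-α)) = (2*β) / (2-α) by ring, lt_div_iff₀ h2α]; linarith
  have hfβsum : Summable fβ := Real.summable_nat_rpow.mpr (by linarith)
  have hfβ0 : ∀ n, 0 ≤ fβ n := fun n => Real.rpow_nonneg (Nat.cast_nonneg n) _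
  set Sβ : ℝ := ∑' n : ℕ, fβ n with hSβ
  have hSβ0 : 0 ≤ Sβ := tsum_nonneg hfβ0
  set fγ : ℕ → ℝ := fun n => (n:ℝ) ^ (-(γ / 2)) with hfγ
  have hfγsum : Summable fγ := Real.summable_nat_rpow.mpr (by linarith)
  have hfγ0 : ∀ n, 0 ≤ fγ n := fun n => Real.rpow_nonneg (Nat.cast_nonneg n) _
  set S : ℝ := ∑' n : ℕ, fγ n with hS
  have hS0 : 0 ≤ S := tsum_nonneg hfγ0
  -- κγ is nonneg
  have hκγ : 0 ≤ 2 * κγ := by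
    have h := hoff 0 0 1 1
    simp only [sub_self, abs_zero] at h
    rw [Real.zero_rpow (ne_of_gt hγ0), add_zero, div_one] at h
    exact h
  set κβ' : ℝ := max κβ 0 with hκβ'
  have hκβ'0 : 0 ≤ κβ' := le_max_right _ _
  set Kγ : ℝ := Real.sqrt (2 * κγ) with hKγ
  have hKγ0 : 0 ≤ Kγ := Real.sqrt_nonneg _
  set c : ℝ := Kγ * (1 + 2 * S) * Real.sqrt (κβ' * Sβ ^ (1/q)) + 1 with hc
  have h1c : 0 ≤ Kγ * (1 + 2 * S) * Real.sqrt (κβ' * Sβ ^ (1/q)) :=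
    mul_nonneg (mul_nonneg hKγ0 (by linarith)) (Real.sqrt_nonneg _)
  have hc0 : 0 < c := lt_of_lt_of_le one_pos (hc ▸ le_add_of_nonneg_left h1c)
  refine ⟨c, hc0, fun x y i => ?_⟩
  set D : ℝ := ‖x - y‖ with hD
  have hD0 : 0 ≤ D := norm_nonneg _
  have hcd : ∀ k : ℕ+, (x - y : lp (fun _ : ℕ+ => ℝ) 2) k = x k - y k := by
    intro k; rw [lp.coeFn_sub]; rfl
  -- Step A: tail sum estimate via Hölder
  set T : ℝ := ∑' k : ℕ+, |x k - y k| ^ α * (k : ℝ) ^ (-β) with hT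
  have hT0 : 0 ≤ T := tsum_nonneg fun k =>
    mul_nonneg (Real.rpow_nonneg (abs_nonneg _) _) (Real.rpow_nonneg (by positivity) _)
  have hTbound : T ≤ Sβ ^ (1/q) * D ^ α := by
    apply tsum_le_of_sum_le'
    · exact mul_nonneg (Real.rpow_nonneg hSβ0 _) (Real.rpow_nonneg hD0 _)
    intro G
    have hHold := Real.inner_le_Lp_mul_Lq G (fun k : ℕ+ => |x k - y k| ^ α)
      (fun k : ℕ+ => (k : ℝ) ^ (-β)) hpq
    beta_reduce at hHold
    refine hHold.trans ?_
    rw [mul_comm (Sβ ^ (1/q))]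
    have nn1 : (0:ℝ) ≤ ∑ k ∈ G, abs (|x k - y k| ^ α) ^ p :=
      Finset.sum_nonneg fun k _ => Real.rpow_nonneg (abs_nonneg _) _
    have nn2 : (0:ℝ) ≤ ∑ k ∈ G, abs ((k:ℝ) ^ (-β)) ^ q :=
      Finset.sum_nonneg fun k _ => Real.rpow_nonneg (abs_nonneg _) _
    apply mul_le_mul
    · -- first factor ≤ D^α
      have e1 : ∀ k : ℕ+, abs (|x k - y k| ^ α) ^ p
          = ‖(x - y : lp (fun _ : ℕ+ => ℝ) 2) k‖ ^ (2:ℝ) := by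
        intro k
        rw [abs_of_nonneg (Real.rpow_nonneg (abs_nonneg _) _), ← Real.rpow_mul (abs_nonneg _),
          hp, show α * (2/α) = 2 by field_simp, hcd k, Real.norm_eq_abs]
      have e2 : ∑ k ∈ G, abs (|x k - y k| ^ α) ^ p ≤ D ^ (2:ℝ) := by
        rw [Finset.sum_congr rfl fun k _ => e1 k]
        have := lp.sum_rpow_le_norm_rpow (p := 2)
          (E := fun _ : ℕ+ => ℝ) (by norm_num) (x - y) G
        simpa using this
      have e3 : (∑ k ∈ G, abs (|x k - y k| ^ α) ^ p) ^ (1/p) ≤ (D ^ (2:ℝ)) ^ (1/p) :=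
        Real.rpow_le_rpow nn1 e2 (by positivity)
      refine e3.trans_eq ?_
      rw [← Real.rpow_mul hD0, hp, show (2:ℝ) * (1 / (2/α)) = α by field_simp]
    · -- second factor ≤ Sβ^(1/q)
      have e1 : ∀ k : ℕ+, abs ((k:ℝ) ^ (-β)) ^ q = fβ (k : ℕ) := by
        intro k
        rw [abs_of_nonneg (Real.rpow_nonneg (by positivity) _),
          ← Real.rpow_mul (by positivity), hfβ]
        beta_reduce
        push_cast
        congr 1
        ring
      have e2 : ∑ k ∈ G, abs ((k:ℝ) ^ (-β)) ^ q ≤ Sβ := by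
        rw [Finset.sum_congr rfl fun k _ => e1 k,
          show ∑ k ∈ G, fβ (k:ℕ) = ∑ n ∈ G.map ⟨_, PNat.coe_injective⟩, fβ n from
            (Finset.sum_map G ⟨_, PNat.coe_injective⟩ fβ).symm]
        exact Summable.sum_le_tsum _ (fun n _ => hfβ0 n) hfβsum
      exact Real.rpow_le_rpow nn2 e2 (by positivity)
    · exact Real.rpow_nonneg nn2 _
    · exact Real.rpow_nonneg hD0 _
  -- Step B: pointwise second bound
  set B : ℝ := κβ' * T with hB
  have hB0 : 0 ≤ B := mul_nonneg hκβ'0 hT0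
  have hΔB : ∀ j : ℕ+, |a x i j - a y i j| ≤ B := fun j =>
    (hhold x y i j).trans (mul_le_mul_of_nonneg_right (le_max_left _ _) hT0)
  have hA0 : ∀ j : ℕ+, 0 ≤ 2 * κγ / (1 + |(i:ℝ) - (j:ℝ)| ^ γ) := fun j =>
    (abs_nonneg _).trans (hoff x y i j)
  have hsqrtB : Real.sqrt B ≤ Real.sqrt (κβ' * Sβ ^ (1/q)) * D ^ (α/2) := by
    have h1 : B ≤ (κβ' * Sβ ^ (1/q)) * D ^ α := by
      rw [hB, mul_assoc]
      exact mul_le_mul_of_nonneg_left hTbound hκβ'0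
    calc Real.sqrt B ≤ Real.sqrt ((κβ' * Sβ ^ (1/q)) * D ^ α) := Real.sqrt_le_sqrt h1
      _ = Real.sqrt (κβ' * Sβ ^ (1/q)) * Real.sqrt (D ^ α) :=
          Real.sqrt_mul (mul_nonneg hκβ'0 (Real.rpow_nonneg hSβ0 _)) _
      _ = Real.sqrt (κβ' * Sβ ^ (1/q)) * D ^ (α/2) := by
          rw [show Real.sqrt (D ^ α) = D ^ (α/2) by
            rw [Real.sqrt_eq_rpow, ← Real.rpow_mul hD0]; congr 1; ring]
  -- Step C: sum of inverse square roots
  set v : ℕ+ → ℝ := fun j => (Real.sqrt (1 + |(i:ℝ) - (j:ℝ)| ^ γ))⁻¹ with hv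
  have hv0 : ∀ j, 0 ≤ v j := fun j => inv_nonneg.mpr (Real.sqrt_nonneg _)
  have hv1 : ∀ j, v j ≤ 1 := by
    intro j
    apply inv_le_one_of_one_le₀
    have h1 : (1:ℝ) ≤ 1 + |(i:ℝ) - (j:ℝ)| ^ γ :=
      le_add_of_nonneg_right (Real.rpow_nonneg (abs_nonneg _) _)
    calc (1:ℝ) = Real.sqrt 1 := Real.sqrt_one.symm
      _ ≤ _ := Real.sqrt_le_sqrt h1
  have hvle : ∀ (n : ℕ) (j : ℕ+), |(i:ℝ) - (j:ℝ)| = (n:ℝ) → 1 ≤ n → v j ≤ fγ n := by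
    intro n j hn hn1
    have hn0 : (1:ℝ) ≤ (n:ℝ) := by exact_mod_cast hn1
    have hpos : 0 < Real.sqrt ((n:ℝ) ^ γ) := Real.sqrt_pos.mpr (by positivity)
    have step1 : v j ≤ (Real.sqrt ((n:ℝ) ^ γ))⁻¹ := by
      apply inv_anti₀ hpos
      apply Real.sqrt_le_sqrt
      rw [hn]; linarith [Real.rpow_nonneg (le_trans zero_le_one hn0) γ]
    refine step1.trans_eq ?_
    rw [Real.sqrt_eq_rpow, ← Real.rpow_mul (by positivity), hfγ]
    beta_reduce
    rw [← Real.rpow_neg (by positivity)]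
    congr 1
    ring
  have hFsum : ∀ F : Finset ℕ+, ∑ j ∈ F, v j ≤ 1 + 2 * S := by
    intro F
    have hmain : ∑ j ∈ F.erase i, v j ≤ 2 * S := by
      set E := F.erase i with hE
      have hsplit := Finset.sum_filter_add_sum_filter_not E (fun j : ℕ+ => (j:ℕ) < (i:ℕ)) v
      have h1 : ∑ j ∈ E.filter (fun j : ℕ+ => (j:ℕ) < (i:ℕ)), v j ≤ S := by
        have hle : ∀ j ∈ E.filter (fun j : ℕ+ => (j:ℕ) < (i:ℕ)), v j ≤ fγ ((i:ℕ) - (j:ℕ)) := by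
          intro j hj
          rw [Finset.mem_filter] at hj
          have hji : (j:ℕ) < (i:ℕ) := hj.2
          have hle' : ((j:ℕ):ℝ) ≤ ((i:ℕ):ℝ) := by exact_mod_cast hji.le
          apply hvle
          · rw [abs_of_nonneg (sub_nonneg.mpr hle'), Nat.cast_sub hji.le]
          · omega
        calc ∑ j ∈ E.filter (fun j : ℕ+ => (j:ℕ) < (i:ℕ)), v j
            ≤ ∑ j ∈ E.filter (fun j : ℕ+ => (j:ℕ) < (i:ℕ)), fγ ((i:ℕ) - (j:ℕ)) :=
              Finset.sum_le_sum hle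
          _ = ∑ n ∈ (E.filter (fun j : ℕ+ => (j:ℕ) < (i:ℕ))).image
                (fun j : ℕ+ => (i:ℕ) - (j:ℕ)), fγ n := by
              rw [Finset.sum_image]
              intro x1 hx1 x2 hx2 hx
              rw [Finset.mem_coe, Finset.mem_filter] at hx1 hx2
              have : (x1:ℕ) = (x2:ℕ) := by simp only at hx; omega
              exact PNat.coe_injective this
          _ ≤ S := Summable.sum_le_tsum _ (fun n _ => hfγ0 n) hfγsum
      have h2 : ∑ j ∈ E.filter (fun j : ℕ+ => ¬ (j:ℕ) < (i:ℕ)), v j ≤ S := by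
        have hle : ∀ j ∈ E.filter (fun j : ℕ+ => ¬ (j:ℕ) < (i:ℕ)), v j ≤ fγ ((j:ℕ) - (i:ℕ)) := by
          intro j hj
          rw [Finset.mem_filter] at hj
          have hji : (i:ℕ) < (j:ℕ) := by
            rcases hj with ⟨hjE, hjlt⟩
            rw [hE, Finset.mem_erase] at hjE
            have : (i:ℕ) ≠ (j:ℕ) := fun h => hjE.1 (PNat.coe_injective h.symm)
            omega
          have hle' : ((i:ℕ):ℝ) ≤ ((j:ℕ):ℝ) := by exact_mod_cast hji.le
          apply hvle
          · rw [abs_of_nonpos (sub_nonpos.mpr hle'), neg_sub, Nat.cast_sub hji.le]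
          · omega
        calc ∑ j ∈ E.filter (fun j : ℕ+ => ¬ (j:ℕ) < (i:ℕ)), v j
            ≤ ∑ j ∈ E.filter (fun j : ℕ+ => ¬ (j:ℕ) < (i:ℕ)), fγ ((j:ℕ) - (i:ℕ)) :=
              Finset.sum_le_sum hle
          _ = ∑ n ∈ (E.filter (fun j : ℕ+ => ¬ (j:ℕ) < (i:ℕ))).image
                (fun j : ℕ+ => (j:ℕ) - (i:ℕ)), fγ n := by
              rw [Finset.sum_image]
              intro x1 hx1 x2 hx2 hx
              rw [Finset.mem_coe, Finset.mem_filter, hE, Finset.mem_erase] at hx1 hx2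
              have e1 : (i:ℕ) ≠ (x1:ℕ) := fun h => hx1.1.1 (PNat.coe_injective h.symm)
              have e2 : (i:ℕ) ≠ (x2:ℕ) := fun h => hx2.1.1 (PNat.coe_injective h.symm)
              have : (x1:ℕ) = (x2:ℕ) := by
                have := hx1.2; have := hx2.2; simp only at hx; omega
              exact PNat.coe_injective this
          _ ≤ S := Summable.sum_le_tsum _ (fun n _ => hfγ0 n) hfγsum
      linarith
    by_cases hiF : i ∈ F
    · have := Finset.add_sum_erase F v hiF
      have hvi := hv1 i
      linarith
    · rw [Finset.erase_eq_of_notMem hiF] at hmain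
      linarith
  -- Step D: combine
  apply tsum_le_of_sum_le'
  · exact mul_nonneg hc0.le (Real.rpow_nonneg hD0 _)
  intro F
  have hptw : ∀ j ∈ F, |a x i j - a y i j|
      ≤ Real.sqrt (2 * κγ / (1 + |(i:ℝ) - (j:ℝ)| ^ γ)) * Real.sqrt B := by
    intro j _
    rw [← Real.sqrt_mul (hA0 j)]
    calc |a x i j - a y i j|
        = Real.sqrt (|a x i j - a y i j| * |a x i j - a y i j|) :=
          (Real.sqrt_mul_self (abs_nonneg _)).symm
      _ ≤ Real.sqrt (2 * κγ / (1 + |(i:ℝ) - (j:ℝ)| ^ γ) * B) :=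
          Real.sqrt_le_sqrt (mul_le_mul (hoff x y i j) (hΔB j) (abs_nonneg _) (hA0 j))
  have hsqA : ∑ j ∈ F, Real.sqrt (2 * κγ / (1 + |(i:ℝ) - (j:ℝ)| ^ γ)) ≤ Kγ * (1 + 2 * S) := by
    have e1 : ∀ j : ℕ+, Real.sqrt (2 * κγ / (1 + |(i:ℝ) - (j:ℝ)| ^ γ)) = Kγ * v j := by
      intro j
      rw [Real.sqrt_div hκγ, hKγ, hv, div_eq_mul_inv]
    rw [Finset.sum_congr rfl fun j _ => e1 j, ← Finset.mul_sum]
    exact mul_le_mul_of_nonneg_left (hFsum F) hKγ0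
  calc ∑ j ∈ F, |a x i j - a y i j|
      ≤ ∑ j ∈ F, Real.sqrt (2 * κγ / (1 + |(i:ℝ) - (j:ℝ)| ^ γ)) * Real.sqrt B :=
        Finset.sum_le_sum hptw
    _ = (∑ j ∈ F, Real.sqrt (2 * κγ / (1 + |(i:ℝ) - (j:ℝ)| ^ γ))) * Real.sqrt B :=
        (Finset.sum_mul _ _ _).symm
    _ ≤ (Kγ * (1 + 2 * S)) * (Real.sqrt (κβ' * Sβ ^ (1/q)) * D ^ (α/2)) := by
        apply mul_le_mul hsqA hsqrtB (Real.sqrt_nonneg _)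
        exact mul_nonneg hKγ0 (by linarith)
    _ ≤ c * D ^ (α/2) := by
        rw [hc, add_mul, one_mul, ← mul_assoc]
        have : 0 ≤ D ^ (α/2) := Real.rpow_nonneg hD0 _
        linarith
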